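/- Let N = b a and N† = a† b† with (a,b) D-pseudo-bosonic, φ_n = b^n φ_0/√(n!), Ψ_n = (a†)^n Ψ_0/√(n!) as above. Then N φ_n = n φ_n and N† Ψ_n = n Ψ_n for all n ≥ 0; moreover if Ψ_n = Θ φ_n for all n and (φ_n),(Ψ_n) are complete biorthogonal D-quasi bases with Θ, Θ⁻¹ preserving D, then N f = Θ⁻¹ N† Θ f for all f ∈ D. -/

import Mathlib

open scoped InnerProductSpace

private lemma aux_raise {H : Type*} [NormedAddCommGroup H] [InnerProductSpace ℂ H]
    (D : Submodule ℂ H) (A B : H →ₗ[ℂ] H)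
    (hstab : ∀ f ∈ D, A f ∈ D ∧ B f ∈ D)
    (hcomm : ∀ f ∈ D, A (B f) - B (A f) = f)
    (v : H) (hv : v ∈ D) (hA : A v = 0) :
    ∀ n : ℕ, (B ^ n) v ∈ D ∧ A ((B ^ n) v) = (n : ℂ) • (B ^ (n - 1)) v := by
  intro n
  induction n with
  | zero => simpa [hA] using hv
  | succ n ih =>
    have hBn : (B ^ (n + 1)) v = B ((B ^ n) v) := by
      rw [pow_succ']; rfl
    have hmem : (B ^ (n + 1)) v ∈ D := by
      rw [hBn]; exact (hstab _ ih.1).2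
    refine ⟨hmem, ?_⟩
    have hc := hcomm _ ih.1
    have h1 : A ((B ^ (n + 1)) v) = B (A ((B ^ n) v)) + (B ^ n) v := by
      rw [hBn, sub_eq_iff_eq_add.mp hc, add_comm]
    rw [h1, ih.2, map_smul]
    cases n with
    | zero => simp
    | succ m =>
      have h2 : B ((B ^ (m + 1 - 1)) v) = (B ^ (m + 1)) v := by
        simp only [Nat.add_sub_cancel]
        rw [pow_succ']; rfl
      rw [h2, Nat.add_sub_cancel]
      have h3 : ((m + 1 + 1 : ℕ) : ℂ) = ((m + 1 : ℕ) : ℂ) + 1 := by push_cast; ring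
      rw [h3, add_smul, one_smul]

private lemma aux_num {H : Type*} [NormedAddCommGroup H] [InnerProductSpace ℂ H]
    (D : Submodule ℂ H) (A B : H →ₗ[ℂ] H)
    (hstab : ∀ f ∈ D, A f ∈ D ∧ B f ∈ D)
    (hcomm : ∀ f ∈ D, A (B f) - B (A f) = f)
    (v : H) (hv : v ∈ D) (hA : A v = 0) :
    ∀ n : ℕ, B (A ((B ^ n) v)) = (n : ℂ) • (B ^ n) v := by
  intro n
  rw [(aux_raise D A B hstab hcomm v hv hA n).2, map_smul]
  cases n with
  | zero => simp
  | succ m =>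
    congr 1
    simp only [Nat.add_sub_cancel]
    rw [pow_succ']; rfl

/-- with `N = ba`, `N† = a†b†` for a `D`-pseudo-bosonic pair `(a,b)`,
one has `N φ_n = n φ_n` and `N† Ψ_n = n Ψ_n`; moreover if `Ψ_n = Θ φ_n` for a
self-adjoint invertible `Θ` preserving `D` together with its inverse, and `(φ_n)`,
`(Ψ_n)` are biorthogonal `D`-quasi bases, then `N f = Θ⁻¹ N† Θ f` for all `f ∈ D`. -/
theorem statement_19
    {H : Type*} [NormedAddCommGroup H] [InnerProductSpace ℂ H]
    (D : Submodule ℂ H) (hD : Dense (D : Set H))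
    (a b ad bd : H →ₗ[ℂ] H)
    (hstab : ∀ f ∈ D, a f ∈ D ∧ b f ∈ D ∧ ad f ∈ D ∧ bd f ∈ D)
    (hadja : ∀ f ∈ D, ∀ g ∈ D, ⟪a f, g⟫_ℂ = ⟪f, ad g⟫_ℂ)
    (hadjb : ∀ f ∈ D, ∀ g ∈ D, ⟪b f, g⟫_ℂ = ⟪f, bd g⟫_ℂ)
    (hcomm : ∀ f ∈ D, a (b f) - b (a f) = f)
    (φ0 Ψ0 : H) (hφ0D : φ0 ∈ D) (hΨ0D : Ψ0 ∈ D)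
    (hφ0 : φ0 ≠ 0) (hΨ0 : Ψ0 ≠ 0)
    (hvaca : a φ0 = 0) (hvacb : bd Ψ0 = 0)
    (hnorm : ⟪φ0, Ψ0⟫_ℂ = 1)
    (φ Ψ : ℕ → H)
    (hφ : ∀ n : ℕ, φ n = ((Real.sqrt n.factorial : ℂ))⁻¹ • (b ^ n) φ0)
    (hΨ : ∀ n : ℕ, Ψ n = ((Real.sqrt n.factorial : ℂ))⁻¹ • (ad ^ n) Ψ0)
    (hbio : ∀ n m : ℕ, ⟪φ n, Ψ m⟫_ℂ = if n = m then 1 else 0)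
    (hqb : ∀ f ∈ D, ∀ g ∈ D,
        HasSum (fun n : ℕ => ⟪f, Ψ n⟫_ℂ * ⟪φ n, g⟫_ℂ) ⟪f, g⟫_ℂ ∧
        HasSum (fun n : ℕ => ⟪f, φ n⟫_ℂ * ⟪Ψ n, g⟫_ℂ) ⟪f, g⟫_ℂ)
    (Θ Θi : H →ₗ[ℂ] H)
    (hsa : ∀ f g : H, ⟪Θ f, g⟫_ℂ = ⟪f, Θ g⟫_ℂ)
    (hinv : (∀ f : H, Θi (Θ f) = f) ∧ (∀ f : H, Θ (Θi f) = f))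
    (hΘD : ∀ f ∈ D, Θ f ∈ D) (hΘiD : ∀ f ∈ D, Θi f ∈ D)
    (hΨΘ : ∀ n : ℕ, Ψ n = Θ (φ n)) :
    (∀ n : ℕ, b (a (φ n)) = (n : ℂ) • φ n) ∧
    (∀ n : ℕ, ad (bd (Ψ n)) = (n : ℂ) • Ψ n) ∧
    (∀ f ∈ D, b (a f) = Θi (ad (bd (Θ f)))) := by
  -- stability helpers
  have hsA : ∀ f ∈ D, a f ∈ D := fun f hf => (hstab f hf).1
  have hsB : ∀ f ∈ D, b f ∈ D := fun f hf => (hstab f hf).2.1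
  have hsAd : ∀ f ∈ D, ad f ∈ D := fun f hf => (hstab f hf).2.2.1
  have hsBd : ∀ f ∈ D, bd f ∈ D := fun f hf => (hstab f hf).2.2.2
  -- commutation for the daggered pair, via density
  have hcomm' : ∀ f ∈ D, bd (ad f) - ad (bd f) = f := by
    intro f hf
    apply hD.eq_of_inner_right ℂ
    rintro g hg
    simp only [inner_sub_right]
    have e1 : ⟪g, bd (ad f)⟫_ℂ = ⟪a (b g), f⟫_ℂ := by
      rw [← hadjb g hg _ (hsAd f hf), ← hadja _ (hsB g hg) f hf]
    have e2 : ⟪g, ad (bd f)⟫_ℂ = ⟪b (a g), f⟫_ℂ := by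
      rw [← hadja g hg _ (hsBd f hf), ← hadjb _ (hsA g hg) f hf]
    rw [e1, e2, ← inner_sub_left, hcomm g hg]
  -- eigenvalue equations
  have hφraise := aux_raise D a b (fun f hf => ⟨hsA f hf, hsB f hf⟩) hcomm φ0 hφ0D hvaca
  have hΨraise := aux_raise D bd ad (fun f hf => ⟨hsBd f hf, hsAd f hf⟩) hcomm' Ψ0 hΨ0D hvacb
  have hφmem : ∀ n, φ n ∈ D := fun n => by
    rw [hφ n]; exact D.smul_mem _ (hφraise n).1
  have hΨmem : ∀ n, Ψ n ∈ D := fun n => by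
    rw [hΨ n]; exact D.smul_mem _ (hΨraise n).1
  have hNφ : ∀ n : ℕ, b (a (φ n)) = (n : ℂ) • φ n := by
    intro n
    rw [hφ n, map_smul, map_smul,
      aux_num D a b (fun f hf => ⟨hsA f hf, hsB f hf⟩) hcomm φ0 hφ0D hvaca n,
      smul_comm]
  have hNΨ : ∀ n : ℕ, ad (bd (Ψ n)) = (n : ℂ) • Ψ n := by
    intro n
    rw [hΨ n, map_smul, map_smul,
      aux_num D bd ad (fun f hf => ⟨hsBd f hf, hsAd f hf⟩) hcomm' Ψ0 hΨ0D hvacb n,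
      smul_comm]
  refine ⟨hNφ, hNΨ, ?_⟩
  intro f hf
  -- key inner-product identities
  have key : ∀ n : ℕ, ⟪Ψ n, b (a f)⟫_ℂ = ⟪Ψ n, Θi (ad (bd (Θ f)))⟫_ℂ := by
    intro n
    have lhs : ⟪Ψ n, b (a f)⟫_ℂ = (n : ℂ) * ⟪Ψ n, f⟫_ℂ := by
      have h1 : ⟪b (a f), Ψ n⟫_ℂ = ⟪f, ad (bd (Ψ n))⟫_ℂ := by
        rw [hadjb _ (hsA f hf) _ (hΨmem n), hadja f hf _ (hsBd _ (hΨmem n))]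
      calc ⟪Ψ n, b (a f)⟫_ℂ = starRingEnd ℂ ⟪b (a f), Ψ n⟫_ℂ := (inner_conj_symm _ _).symm
        _ = starRingEnd ℂ ⟪f, ad (bd (Ψ n))⟫_ℂ := by rw [h1]
        _ = starRingEnd ℂ ((n : ℂ) * ⟪f, Ψ n⟫_ℂ) := by rw [hNΨ n, inner_smul_right]
        _ = (n : ℂ) * ⟪Ψ n, f⟫_ℂ := by
            rw [map_mul, inner_conj_symm]
            simp
    have rhs : ⟪Ψ n, Θi (ad (bd (Θ f)))⟫_ℂ = (n : ℂ) * ⟪Ψ n, f⟫_ℂ := by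
      have h2 : ⟪Ψ n, Θi (ad (bd (Θ f)))⟫_ℂ = ⟪φ n, ad (bd (Θ f))⟫_ℂ := by
        rw [hΨΘ n, hsa, hinv.2]
      have h3 : ⟪φ n, ad (bd (Θ f))⟫_ℂ = ⟪b (a (φ n)), Θ f⟫_ℂ := by
        rw [← hadja _ (hφmem n) _ (hsBd _ (hΘD f hf)),
          ← hadjb _ (hsA _ (hφmem n)) _ (hΘD f hf)]
      rw [h2, h3, hNφ n, inner_smul_left, ← hsa, ← hΨΘ n]
      simp
    rw [lhs, rhs]
  -- conclude via the quasi-basis expansion and density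
  apply hD.eq_of_inner_right ℂ
  rintro g hg
  have hNfD : b (a f) ∈ D := hsB _ (hsA f hf)
  have hYD : Θi (ad (bd (Θ f))) ∈ D := hΘiD _ (hsAd _ (hsBd _ (hΘD f hf)))
  have S1 := (hqb g hg _ hNfD).2
  have S2 := (hqb g hg _ hYD).2
  have : HasSum (fun n : ℕ => ⟪g, φ n⟫_ℂ * ⟪Ψ n, b (a f)⟫_ℂ)
      ⟪g, Θi (ad (bd (Θ f)))⟫_ℂ := by
    simpa only [key] using S2
  exact S1.unique this
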